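/- Let ρ > 0 and ν ∈ ℝ with cos(πν) ≠ 0, and let g₀(r) = −(√(r² + ρ²)/(4π cos(πν) r ρ)) · sin((ν + 1/2) · arccos((r² − ρ²)/(r² + ρ²))). Then r · g₀(r) tends to −1/(4π) as r → 0⁺, and r · g₀(r) tends to −(2ν + 1)/(4π cos(πν)) as r → ∞. -/

import Mathlib

open Real Filter

theorem central_green_boundary_behaviour
    (ρ ν : ℝ) (hρ : 0 < ρ) (hν : Real.cos (Real.pi * ν) ≠ 0)
    (g₀ : ℝ → ℝ)
    (hg₀ : g₀ = fun r =>
      -(Real.sqrt (r ^ 2 + ρ ^ 2) / (4 * Real.pi * Real.cos (Real.pi * ν) * r * ρ))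
        * Real.sin ((ν + 1 / 2) * Real.arccos ((r ^ 2 - ρ ^ 2) / (r ^ 2 + ρ ^ 2)))) :
    Filter.Tendsto (fun r => r * g₀ r) (nhdsWithin 0 (Set.Ioi (0 : ℝ)))
        (nhds (-1 / (4 * Real.pi))) ∧
      Filter.Tendsto (fun r => r * g₀ r) Filter.atTop
        (nhds (-(2 * ν + 1) / (4 * Real.pi * Real.cos (Real.pi * ν)))) := by
  have hπ := Real.pi_pos
  set c := Real.cos (Real.pi * ν) with hc
  constructor
  · -- limit at 0⁺
    set G : ℝ → ℝ := fun r =>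
      -(Real.sqrt (r ^ 2 + ρ ^ 2) / (4 * Real.pi * c * ρ))
        * Real.sin ((ν + 1 / 2) * Real.arccos ((r ^ 2 - ρ ^ 2) / (r ^ 2 + ρ ^ 2))) with hG
    have hden : (0:ℝ) ^ 2 + ρ ^ 2 ≠ 0 := by positivity
    have h1 : ContinuousAt (fun r : ℝ => (r ^ 2 - ρ ^ 2) / (r ^ 2 + ρ ^ 2)) 0 :=
      ContinuousAt.div (by fun_prop) (by fun_prop) hden
    have h2 : ContinuousAt (fun r : ℝ =>
        Real.sin ((ν + 1 / 2) * Real.arccos ((r ^ 2 - ρ ^ 2) / (r ^ 2 + ρ ^ 2)))) 0 :=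
      Real.continuous_sin.continuousAt.comp
        (continuousAt_const.mul (Real.continuous_arccos.continuousAt.comp h1))
    have h3 : ContinuousAt (fun r : ℝ =>
        -(Real.sqrt (r ^ 2 + ρ ^ 2) / (4 * Real.pi * c * ρ))) 0 := by fun_prop
    have hGc : ContinuousAt G 0 := h3.mul h2
    have hG0 : G 0 = -1 / (4 * Real.pi) := by
      have e1 : ((0:ℝ) ^ 2 - ρ ^ 2) / ((0:ℝ) ^ 2 + ρ ^ 2) = -1 := by
        field_simp
        ring
      have e2 : (ν + 1 / 2) * Real.arccos (-1) = Real.pi * ν + Real.pi / 2 := by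
        rw [Real.arccos_neg_one]; ring
      have e3 : Real.sqrt ((0:ℝ) ^ 2 + ρ ^ 2) = ρ := by
        simp [Real.sqrt_sq hρ.le]
      rw [hG]
      simp only [e1, e2, e3, Real.sin_add_pi_div_two]
      rw [← hc]
      field_simp
    have hev : ∀ r ∈ Set.Ioi (0:ℝ), r * g₀ r = G r := by
      intro r hr
      have hr0 : r ≠ 0 := ne_of_gt hr
      rw [hg₀, hG]
      simp only
      field_simp
    have := (hGc.continuousWithinAt (s := Set.Ioi (0:ℝ))).tendsto
    rw [hG0] at this
    exact this.congr' (by filter_upwards [self_mem_nhdsWithin] with r hr using (hev r hr).symm)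
  · -- limit at ∞
    set Φ : ℝ → ℝ := fun t =>
      -(1 / (4 * Real.pi * c)) *
        (Real.sqrt (1 + t ^ 2) * (Real.sin ((2 * ν + 1) * Real.arctan t) / t)) with hΦ
    -- slope limit
    have hd : HasDerivAt (fun t => Real.sin ((2 * ν + 1) * Real.arctan t)) (2 * ν + 1) 0 := by
      have h1 : HasDerivAt (fun t : ℝ => (2 * ν + 1) * Real.arctan t)
          ((2 * ν + 1) * (1 / (1 + (0:ℝ) ^ 2))) 0 := (Real.hasDerivAt_arctan 0).const_mul _
      have h2 := (Real.hasDerivAt_sin ((2 * ν + 1) * Real.arctan 0)).comp 0 h1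
      convert h2 using 1
      · rfl
      · rfl
      · rfl
      simp [Real.arctan_zero]
    have hslope : Tendsto (fun t => Real.sin ((2 * ν + 1) * Real.arctan t) / t)
        (nhdsWithin 0 {(0:ℝ)}ᶜ) (nhds (2 * ν + 1)) := by
      have := hasDerivAt_iff_tendsto_slope.mp hd
      refine this.congr' ?_
      filter_upwards [self_mem_nhdsWithin] with t ht
      simp [slope, Real.arctan_zero, div_eq_inv_mul]
    have hsqrt : Tendsto (fun t : ℝ => Real.sqrt (1 + t ^ 2))
        (nhdsWithin 0 {(0:ℝ)}ᶜ) (nhds 1) := by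
      have : ContinuousAt (fun t : ℝ => Real.sqrt (1 + t ^ 2)) 0 := by fun_prop
      have h := this.continuousWithinAt (s := {(0:ℝ)}ᶜ)
      simpa using h.tendsto
    have hΦlim : Tendsto Φ (nhdsWithin 0 {(0:ℝ)}ᶜ)
        (nhds (-(2 * ν + 1) / (4 * Real.pi * c))) := by
      have := (hsqrt.mul hslope).const_mul (-(1 / (4 * Real.pi * c)))
      rw [hΦ]
      convert this using 2
      field_simp
    -- t = ρ/r → 0 within ≠ 0
    have ht : Tendsto (fun r : ℝ => ρ / r) atTop (nhdsWithin 0 {(0:ℝ)}ᶜ) := by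
      rw [tendsto_nhdsWithin_iff]
      constructor
      · have : Tendsto (fun r : ℝ => ρ * r⁻¹) atTop (nhds (ρ * 0)) :=
          tendsto_inv_atTop_zero.const_mul ρ
        simpa [div_eq_mul_inv] using this
      · filter_upwards [eventually_gt_atTop (0:ℝ)] with r hr
        exact ne_of_gt (div_pos hρ hr)
    have hcomp := hΦlim.comp ht
    refine hcomp.congr' ?_
    filter_upwards [eventually_gt_atTop (0:ℝ)] with r hr
    have hr0 : r ≠ 0 := ne_of_gt hr
    -- arccos identity
    have harc : Real.arccos ((r ^ 2 - ρ ^ 2) / (r ^ 2 + ρ ^ 2)) = 2 * Real.arctan (ρ / r) := by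
      have hat : 0 < Real.arctan (ρ / r) := by
        have := Real.arctan_strictMono (div_pos hρ hr)
        simpa [Real.arctan_zero] using this
      have hat2 : Real.arctan (ρ / r) < Real.pi / 2 := Real.arctan_lt_pi_div_two _
      have hcos : Real.cos (2 * Real.arctan (ρ / r)) = (r ^ 2 - ρ ^ 2) / (r ^ 2 + ρ ^ 2) := by
        rw [Real.cos_two_mul, Real.cos_arctan]
        have h1 : (1:ℝ) + (ρ / r) ^ 2 = (r ^ 2 + ρ ^ 2) / r ^ 2 := by field_simp
        have hs : Real.sqrt ((1:ℝ) + (ρ / r) ^ 2) ^ 2 = 1 + (ρ / r) ^ 2 :=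
          Real.sq_sqrt (by positivity)
        rw [div_pow, one_pow, hs, h1]
        have hden : (0:ℝ) < r ^ 2 + ρ ^ 2 := by positivity
        field_simp
        ring
      rw [← hcos, Real.arccos_cos (by linarith) (by linarith)]
    have hsq : Real.sqrt (1 + (ρ / r) ^ 2) = Real.sqrt (r ^ 2 + ρ ^ 2) / r := by
      have h1 : (1:ℝ) + (ρ / r) ^ 2 = (r ^ 2 + ρ ^ 2) / r ^ 2 := by field_simp
      rw [h1, Real.sqrt_div (by positivity), Real.sqrt_sq hr.le]
    show (Φ ∘ fun r => ρ / r) r = r * g₀ r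
    rw [hg₀, hΦ]
    simp only [Function.comp]
    rw [harc, hsq]
    have h2 : (ν + 1 / 2) * (2 * Real.arctan (ρ / r)) = (2 * ν + 1) * Real.arctan (ρ / r) := by
      ring
    rw [h2]
    field_simp
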